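/- Let G be an r-regular simple graph with n vertices and m edges, where r ≥ 2 (so that m ≥ n), and let q_1 ≤ q_2 ≤ … ≤ q_n = 2r be the eigenvalues of Q(G) listed with multiplicity. Then f(λ, G^{01+}) = [(λ-r)(λ-2m) - 2r]·(λ-m)^{m-n}·∏_{i=1}^{n-1}[(λ-r)(λ-m) - q_i]. -/

import Mathlib

open Classical

/-- The four symbols `0, 1, +, -` used in `xyz`-transformations. -/
inductive XYZ : Type
  | zero | one | plus | minus

namespace XYZ

/-- The relation on the vertices of a graph `H` given by a symbol:
`0` gives the empty graph, `1` the complete graph, `+` the graph itself,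
`-` its complement. -/
def rel {W : Type*} (H : SimpleGraph W) : XYZ → W → W → Prop
  | .zero => fun _ _ => False
  | .one  => fun u v => u ≠ v
  | .plus => fun u v => H.Adj u v
  | .minus => fun u v => u ≠ v ∧ ¬ H.Adj u v

/-- The incidence relation between a vertex and an edge given by a symbol `z`:
`+` means incident, `-` means non-incident, `0` never, `1` always. -/
def inc {W : Type*} (G : SimpleGraph W) : XYZ → W → G.edgeSet → Prop
  | .zero => fun _ _ => False
  | .one  => fun _ _ => True
  | .plus => fun v e => v ∈ (e : Sym2 W)
  | .minus => fun v e => v ∉ (e : Sym2 W)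

theorem rel_symm {W : Type*} (H : SimpleGraph W) (x : XYZ) {u v : W}
    (h : rel H x u v) : rel H x v u := by
  cases x with
  | zero => exact h.elim
  | one => exact (h : u ≠ v).symm
  | plus => exact H.adj_symm h
  | minus => exact ⟨(h.1).symm, fun h' => h.2 (H.adj_symm h')⟩

theorem rel_irrefl {W : Type*} (H : SimpleGraph W) (x : XYZ) {u : W}
    (h : rel H x u u) : False := by
  cases x with
  | zero => exact h
  | one => exact h rfl
  | plus => exact H.irrefl h
  | minus => exact h.1 rfl

end XYZ

/-- The `xyz`-transformation `G^{xyz}` of a graph `G`: its vertex set is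
`V(G) ⊕ E(G)`; two vertices of `G` are adjacent according to the symbol `x`
(applied to `G`), two edges according to the symbol `y` (applied to the line
graph of `G`), and a vertex and an edge according to the symbol `z`
(`+` = incidence graph `B(G)`, `-` = non-incidence graph `B^c(G)`,
`0` = no vertex-edge edges, `1` = all vertex-edge edges). -/
def xyzTransform {V : Type*} (G : SimpleGraph V) (x y z : XYZ) :
    SimpleGraph (V ⊕ G.edgeSet) where
  Adj a b :=
    match a, b with
    | Sum.inl u, Sum.inl v => XYZ.rel G x u v
    | Sum.inr e, Sum.inr f => XYZ.rel G.lineGraph y e f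
    | Sum.inl v, Sum.inr e => XYZ.inc G z v e
    | Sum.inr e, Sum.inl v => XYZ.inc G z v e
  symm := by
    refine ⟨?_⟩
    rintro (u | e) (v | f) h
    · exact XYZ.rel_symm G x h
    · exact h
    · exact h
    · exact XYZ.rel_symm G.lineGraph y h
  loopless := by
    refine ⟨?_⟩
    rintro (u | e) h
    · exact XYZ.rel_irrefl G x h
    · exact XYZ.rel_irrefl G.lineGraph y h

/-- The signless Laplacian matrix `Q(G) = D(G) + A(G)` of a graph. -/
noncomputable def signlessLaplacian {V : Type*} [Fintype V] (G : SimpleGraph V) :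
    Matrix V V ℝ :=
  Matrix.of fun u v =>
    (if u = v then (G.degree u : ℝ) else 0) + (if G.Adj u v then 1 else 0)

/-- The signless Laplacian characteristic polynomial
`f(λ, G) = det (λ I - Q(G))`, evaluated at a real number `λ`. -/
noncomputable def fQ {V : Type*} [Fintype V] (G : SimpleGraph V) (lam : ℝ) : ℝ :=
  Matrix.det (lam • (1 : Matrix V V ℝ) - signlessLaplacian G)


section Aux
open Matrix Finset
variable {V : Type*} [Fintype V] (G : SimpleGraph V)

noncomputable def incB : Matrix V G.edgeSet ℝ :=
  Matrix.of fun v e => if v ∈ (e : Sym2 V) then 1 else 0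

lemma card_filter_mem_edge (v : V) :
    #(Finset.univ.filter fun e : G.edgeSet => v ∈ (e : Sym2 V)) = G.degree v := by
  classical
  rw [← SimpleGraph.card_incidenceSet_eq_degree]
  rw [← Fintype.card_subtype]
  exact Fintype.card_congr
    { toFun := fun x => ⟨x.1.1, x.1.2, x.2⟩
      invFun := fun x => ⟨⟨x.1, x.2.1⟩, x.2.2⟩
      left_inv := fun _ => rfl
      right_inv := fun _ => rfl }

lemma card_filter_mem_vert (e : G.edgeSet) :
    #(Finset.univ.filter fun u : V => u ∈ (e : Sym2 V)) = 2 := by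
  classical
  obtain ⟨e, he⟩ := e
  induction e with
  | _ a b =>
    rw [SimpleGraph.mem_edgeSet] at he
    have : (Finset.univ.filter fun u : V => u ∈ s(a, b)) = {a, b} := by
      ext u; simp [Sym2.mem_iff]
    rw [this, Finset.card_pair he.ne]

lemma card_filter_mem_both {u v : V} (huv : u ≠ v) :
    #(Finset.univ.filter fun e : G.edgeSet => u ∈ (e : Sym2 V) ∧ v ∈ (e : Sym2 V)) =
      if G.Adj u v then 1 else 0 := by
  classical
  split_ifs with h
  · rw [Finset.card_eq_one]
    refine ⟨⟨s(u, v), h⟩, ?_⟩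
    ext ⟨e, he⟩
    simp only [Finset.mem_filter, Finset.mem_univ, true_and, Finset.mem_singleton]
    constructor
    · rintro ⟨h1, h2⟩
      exact Subtype.ext ((Sym2.mem_and_mem_iff huv).mp ⟨h1, h2⟩)
    · intro h'
      obtain rfl : e = s(u, v) := congrArg Subtype.val h'
      exact ⟨Sym2.mem_mk_left u v, Sym2.mem_mk_right u v⟩
  · rw [Finset.card_eq_zero]
    ext ⟨e, he⟩
    simp only [Finset.mem_filter, Finset.mem_univ, true_and, Finset.notMem_empty, iff_false]
    rintro ⟨h1, h2⟩
    have : e = s(u, v) := (Sym2.mem_and_mem_iff huv).mp ⟨h1, h2⟩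
    subst this
    exact h (G.mem_edgeSet.mp he)

lemma incB_mul_transpose : incB G * (incB G)ᵀ = signlessLaplacian G := by
  ext u v
  simp only [Matrix.mul_apply, Matrix.transpose_apply, incB, Matrix.of_apply, signlessLaplacian]
  have h1 : ∀ e : G.edgeSet,
      (if u ∈ (e : Sym2 V) then (1:ℝ) else 0) * (if v ∈ (e : Sym2 V) then 1 else 0)
        = if (u ∈ (e : Sym2 V) ∧ v ∈ (e : Sym2 V)) then 1 else 0 := by
    intro e; split_ifs with h1 h2 h3 <;> simp_all
  rw [Finset.sum_congr rfl fun e _ => h1 e, Finset.sum_boole]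
  by_cases huv : u = v
  · subst huv
    rw [if_pos rfl, if_neg (G.irrefl), add_zero]
    rw [show (Finset.univ.filter fun e : G.edgeSet => u ∈ (e : Sym2 V) ∧ u ∈ (e : Sym2 V))
        = (Finset.univ.filter fun e : G.edgeSet => u ∈ (e : Sym2 V)) from by simp,
      card_filter_mem_edge G u]
  · rw [if_neg huv, card_filter_mem_both G huv, zero_add]
    split_ifs <;> norm_num

lemma incB_mulVec_one : incB G *ᵥ (fun _ => 1) = fun v => (G.degree v : ℝ) := by
  funext v
  simp only [Matrix.mulVec, dotProduct, incB, Matrix.of_apply, mul_one]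
  rw [Finset.sum_boole, ← card_filter_mem_edge G v]

lemma incB_transpose_mulVec_one : (incB G)ᵀ *ᵥ (fun _ => 1) = fun _ => 2 := by
  funext e
  simp only [Matrix.mulVec, dotProduct, Matrix.transpose_apply, incB, Matrix.of_apply,
    mul_one]
  rw [Finset.sum_boole, card_filter_mem_vert G e]
  norm_num
end Aux

section Transform
open Matrix Finset
variable {V : Type*} [Fintype V] (G : SimpleGraph V)

lemma tr_adj_inl_inl (u v : V) :
    (xyzTransform G XYZ.zero XYZ.one XYZ.plus).Adj (Sum.inl u) (Sum.inl v) ↔ False := Iff.rfl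

lemma tr_adj_inl_inr (v : V) (e : G.edgeSet) :
    (xyzTransform G XYZ.zero XYZ.one XYZ.plus).Adj (Sum.inl v) (Sum.inr e) ↔ v ∈ (e : Sym2 V) :=
  Iff.rfl

lemma tr_adj_inr_inl (e : G.edgeSet) (v : V) :
    (xyzTransform G XYZ.zero XYZ.one XYZ.plus).Adj (Sum.inr e) (Sum.inl v) ↔ v ∈ (e : Sym2 V) :=
  Iff.rfl

lemma tr_adj_inr_inr (e f : G.edgeSet) :
    (xyzTransform G XYZ.zero XYZ.one XYZ.plus).Adj (Sum.inr e) (Sum.inr f) ↔ e ≠ f := Iff.rfl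

lemma tr_degree_inl (v : V) :
    (xyzTransform G XYZ.zero XYZ.one XYZ.plus).degree (Sum.inl v) = G.degree v := by
  classical
  rw [SimpleGraph.degree, SimpleGraph.neighborFinset_eq_filter, Finset.card_filter,
    Fintype.sum_sum_type]
  simp only [tr_adj_inl_inl, tr_adj_inl_inr, if_false, Finset.sum_const_zero, zero_add]
  rw [← Finset.card_filter, card_filter_mem_edge]

lemma tr_degree_inr (e : G.edgeSet) :
    (xyzTransform G XYZ.zero XYZ.one XYZ.plus).degree (Sum.inr e) = Fintype.card G.edgeSet + 1 := by
  classical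
  rw [SimpleGraph.degree, SimpleGraph.neighborFinset_eq_filter, Finset.card_filter,
    Fintype.sum_sum_type]
  simp only [tr_adj_inr_inl, tr_adj_inr_inr]
  rw [← Finset.card_filter, ← Finset.card_filter, card_filter_mem_vert]
  have h1 : (Finset.univ.filter fun f : G.edgeSet => e ≠ f) = Finset.univ.erase e := by
    ext f; simp [eq_comm, Ne]
  rw [h1, Finset.card_erase_of_mem (Finset.mem_univ e), Finset.card_univ]
  have h2 : 0 < Fintype.card G.edgeSet := Fintype.card_pos_iff.mpr ⟨e⟩
  omega
end Transform

section Block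
open Matrix Finset
variable {V : Type*} [Fintype V] (G : SimpleGraph V)

lemma tr_block (r : ℕ) (hreg : G.IsRegularOfDegree r) (lam : ℝ) :
    fQ (xyzTransform G XYZ.zero XYZ.one XYZ.plus) lam
      = (Matrix.fromBlocks ((lam - (r : ℝ)) • 1) (-(incB G)) (-(incB G)ᵀ)
          (((lam - (Fintype.card G.edgeSet : ℝ)) • 1)
            - Matrix.vecMulVec (fun _ => 1) (fun _ => 1))).det := by
  classical
  rw [fQ]
  congr 1
  ext i j
  rcases i with u | e <;> rcases j with v | f
  · by_cases h : u = v
    · subst h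
      simp [signlessLaplacian, Matrix.one_apply, tr_degree_inl, hreg u]
    · simp [signlessLaplacian, Matrix.one_apply, h, Sum.inl.injEq, tr_adj_inl_inl]
  · simp [signlessLaplacian, Matrix.one_apply, incB, tr_adj_inl_inr]
  · simp [signlessLaplacian, Matrix.one_apply, incB, tr_adj_inr_inl]
  · by_cases h : e = f
    · subst h
      simp [signlessLaplacian, Matrix.one_apply, tr_degree_inr, Matrix.vecMulVec_apply]
      push_cast
      ring
    · simp [signlessLaplacian, Matrix.one_apply, h, Sum.inr.injEq, Matrix.vecMulVec_apply,
        tr_adj_inr_inr]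
end Block

section Main
open Matrix Finset
variable {V : Type*} [Fintype V] {G : SimpleGraph V}

lemma det_smul_one_sub_smul (n m : ℕ) (hn : Fintype.card V = n)
    (hm : Fintype.card G.edgeSet = m) (hnm : n ≤ m) (q : Fin n → ℝ)
    (hq : ∀ x : ℝ, fQ G x = ∏ i : Fin n, (x - q i))
    (a t : ℝ) (ha : a ≠ 0) (ht : t ≠ 0) :
    Matrix.det (t • (1 : Matrix G.edgeSet G.edgeSet ℝ) - a⁻¹ • ((incB G)ᵀ * incB G))
      = t ^ (m - n) * ∏ i : Fin n, (t - a⁻¹ * q i) := by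
  classical
  set B := incB G with hB
  set μ : ℝ := t * a with hμdef
  have hμ : μ ≠ 0 := mul_ne_zero ht ha
  have h1 : t • (1 : Matrix G.edgeSet G.edgeSet ℝ) - a⁻¹ • (Bᵀ * B)
      = a⁻¹ • (μ • 1 - Bᵀ * B) := by
    rw [smul_sub, smul_smul]
    congr 2
    rw [hμdef]; field_simp
  have h2 : Matrix.det (μ • (1 : Matrix G.edgeSet G.edgeSet ℝ) - Bᵀ * B)
      = μ ^ (m - n) * Matrix.det (μ • (1 : Matrix V V ℝ) - B * Bᵀ) := by
    have e1 : μ • (1 : Matrix G.edgeSet G.edgeSet ℝ) - Bᵀ * B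
        = μ • (1 - (μ⁻¹ • Bᵀ) * B) := by
      rw [smul_sub, Matrix.smul_mul, smul_smul, mul_inv_cancel₀ hμ, one_smul]
    have e2 : μ • (1 : Matrix V V ℝ) - B * Bᵀ
        = μ • (1 - B * (μ⁻¹ • Bᵀ)) := by
      rw [smul_sub, Matrix.mul_smul, smul_smul, mul_inv_cancel₀ hμ, one_smul]
    rw [e1, e2, Matrix.det_smul, Matrix.det_smul, Matrix.det_one_sub_mul_comm, hm, hn]
    rw [show μ ^ m = μ ^ (m - n) * μ ^ n from by rw [← pow_add, Nat.sub_add_cancel hnm]]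
    ring
  have h3 : Matrix.det (μ • (1 : Matrix V V ℝ) - B * Bᵀ) = ∏ i : Fin n, (μ - q i) := by
    rw [hB, incB_mul_transpose, ← fQ, hq]
  rw [h1, Matrix.det_smul, hm, h2, h3]
  have h4 : ∀ i : Fin n, μ - q i = a * (t - a⁻¹ * q i) := by
    intro i; rw [hμdef, mul_sub, ← mul_assoc, mul_inv_cancel₀ ha, one_mul, mul_comm]
  rw [Finset.prod_congr rfl fun i _ => h4 i, Finset.prod_mul_distrib, Finset.prod_const,
    Finset.card_univ, Fintype.card_fin]
  rw [show m = (m - n) + n from (Nat.sub_add_cancel hnm).symm]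
  rw [pow_add, mul_pow, inv_pow]
  rw [Nat.add_sub_cancel]
  field_simp
  rw [← mul_pow, one_div, inv_mul_cancel₀ ha, one_pow, one_mul]
end Main

open Matrix Finset in
lemma det_sub_vecMulVec_one {E : Type*} [Fintype E] [DecidableEq E] (N : Matrix E E ℝ) (α : ℝ) (hα : α ≠ 0)
    (hN : N *ᵥ (fun _ => 1) = fun _ => α) :
    Matrix.det (N - Matrix.vecMulVec (fun _ => 1) (fun _ => 1))
      = Matrix.det N * (1 - (Fintype.card E : ℝ) * α⁻¹) := by
  classical
  have h1 : N * Matrix.vecMulVec (fun _ => (1:ℝ)) (fun _ => 1)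
      = α • Matrix.vecMulVec (fun _ => (1:ℝ)) (fun _ => 1) := by
    ext i j
    have h := congrFun hN i
    simp only [Matrix.mulVec, dotProduct, mul_one] at h
    simp [Matrix.mul_apply, Matrix.vecMulVec_apply, h]
  have h2 : N - Matrix.vecMulVec (fun _ => (1:ℝ)) (fun _ => 1)
      = N * (1 - α⁻¹ • Matrix.vecMulVec (fun _ => (1:ℝ)) (fun _ => 1)) := by
    rw [Matrix.mul_sub, Matrix.mul_one, Matrix.mul_smul, h1, smul_smul,
      inv_mul_cancel₀ hα, one_smul]
  rw [h2, Matrix.det_mul]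
  congr 1
  have h3 : (1 : Matrix E E ℝ) - α⁻¹ • Matrix.vecMulVec (fun _ => (1:ℝ)) (fun _ => 1)
      = 1 + Matrix.replicateCol Unit (fun _ : E => -α⁻¹) * Matrix.replicateRow Unit (fun _ : E => (1:ℝ)) := by
    rw [← Matrix.vecMulVec_eq Unit]
    ext i j
    simp [Matrix.vecMulVec_apply, sub_eq_add_neg]
  rw [h3, Matrix.det_one_add_replicateCol_mul_replicateRow]
  simp [dotProduct, Finset.sum_const, Finset.card_univ]
  ring

open Matrix Finset in
lemma BtB_mulVec_one {V : Type*} [Fintype V] (G : SimpleGraph V) (r : ℕ)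
    (hreg : G.IsRegularOfDegree r) :
    ((incB G)ᵀ * incB G) *ᵥ (fun _ => 1) = fun _ => (2 * r : ℝ) := by
  rw [← Matrix.mulVec_mulVec, incB_mulVec_one]
  have h1 : (fun v => (G.degree v : ℝ)) = (r : ℝ) • (fun _ : V => (1:ℝ)) := by
    funext v; simp [hreg v]
  rw [h1, Matrix.mulVec_smul, incB_transpose_mulVec_one]
  funext e; simp; ring

lemma prod_split_last (n : ℕ) (hn0 : 0 < n) (f : Fin n → ℝ) :
    ∏ i : Fin n, f i
      = (∏ i : Fin (n - 1), f (Fin.castLE (Nat.sub_le n 1) i)) * f ⟨n - 1, by omega⟩ := by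
  obtain ⟨k, rfl⟩ : ∃ k, n = k + 1 := ⟨n - 1, by omega⟩
  rw [Fin.prod_univ_castSucc]
  congr 1

open Matrix Finset in
lemma main_good {V : Type*} [Fintype V] (G : SimpleGraph V) (r n m : ℕ)
    (hn : Fintype.card V = n) (hm : Fintype.card G.edgeSet = m)
    (hreg : G.IsRegularOfDegree r) (hn0 : 0 < n) (hnm : n ≤ m)
    (q : Fin n → ℝ) (hlast : q ⟨n - 1, by omega⟩ = 2 * r)
    (hq : ∀ x : ℝ, fQ G x = ∏ i : Fin n, (x - q i))
    (lam : ℝ) (hr' : lam - (r : ℝ) ≠ 0) (hm' : lam - (m : ℝ) ≠ 0)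
    (hqi : ∀ i : Fin n, (lam - r) * (lam - m) - q i ≠ 0) :
    fQ (xyzTransform G XYZ.zero XYZ.one XYZ.plus) lam =
      ((lam - r) * (lam - 2 * m) - 2 * r) * (lam - m) ^ (m - n) *
        ∏ i : Fin (n - 1), ((lam - r) * (lam - m) - q (Fin.castLE (Nat.sub_le n 1) i)) := by
  classical
  set c : ℝ := (lam - r)⁻¹ with hc
  set α : ℝ := (lam - m) - c * (2 * r) with hα
  have hαr : (lam - r) * α = (lam - r) * (lam - m) - 2 * r := by
    rw [hα, hc]; field_simp
  have hα0 : α ≠ 0 := by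
    intro h
    apply hqi ⟨n - 1, by omega⟩
    rw [hlast, ← hαr, h, mul_zero]
  -- block decomposition
  rw [tr_block G r hreg lam, hm]
  -- invertibility of the top-left block
  haveI : Invertible ((lam - (r : ℝ)) • (1 : Matrix V V ℝ)) :=
    ⟨c • 1, by rw [Matrix.smul_mul, Matrix.mul_smul, smul_smul, hc,
        inv_mul_cancel₀ hr', Matrix.one_mul, one_smul],
      by rw [Matrix.smul_mul, Matrix.mul_smul, smul_smul, hc,
        mul_inv_cancel₀ hr', Matrix.one_mul, one_smul]⟩
  rw [Matrix.det_fromBlocks₁₁]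
  have hinv : ⅟((lam - (r : ℝ)) • (1 : Matrix V V ℝ)) = c • 1 :=
    invOf_eq_right_inv (by rw [Matrix.smul_mul, Matrix.mul_smul, smul_smul, hc,
      mul_inv_cancel₀ hr', Matrix.one_mul, one_smul])
  rw [hinv]
  have hCB : -(incB G)ᵀ * (c • (1 : Matrix V V ℝ)) * -(incB G)
      = c • ((incB G)ᵀ * incB G) := by
    rw [Matrix.neg_mul, Matrix.mul_neg, Matrix.neg_mul, neg_neg, Matrix.mul_smul,
      Matrix.mul_one, Matrix.smul_mul]
  rw [hCB]
  have hre : ((lam - (m : ℝ)) • 1 - Matrix.vecMulVec (fun _ => 1) (fun _ => 1))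
        - c • ((incB G)ᵀ * incB G)
      = ((lam - (m : ℝ)) • 1 - c • ((incB G)ᵀ * incB G))
        - Matrix.vecMulVec (fun _ => 1) (fun _ => 1) := by
    rw [sub_right_comm]
  rw [hre]
  -- the rank-one update
  have hNv : ((lam - (m : ℝ)) • 1 - c • ((incB G)ᵀ * incB G)) *ᵥ (fun _ => 1)
      = fun _ => α := by
    rw [Matrix.sub_mulVec, Matrix.smul_mulVec, Matrix.smul_mulVec,
      Matrix.one_mulVec, BtB_mulVec_one G r hreg]
    funext e
    simp [hα]
  rw [det_sub_vecMulVec_one _ α hα0 hNv, hm]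
  -- determinants of the two diagonal pieces
  rw [Matrix.det_smul, Matrix.det_one, mul_one, hn,
    det_smul_one_sub_smul n m hn hm hnm q hq (lam - r) (lam - m) hr' hm']
  -- split the product
  rw [prod_split_last n hn0 (fun i => (lam - m) - (lam - r)⁻¹ * q i), hlast]
  have hprod : ∏ i : Fin (n - 1), ((lam - r) * (lam - m) - q (Fin.castLE (Nat.sub_le n 1) i))
      = (lam - r) ^ (n - 1) *
        ∏ i : Fin (n - 1), ((lam - m) - (lam - r)⁻¹ * q (Fin.castLE (Nat.sub_le n 1) i)) := by
    have he : ∀ i : Fin (n - 1), (lam - r) * (lam - m) - q (Fin.castLE (Nat.sub_le n 1) i)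
        = (lam - r) * ((lam - m) - (lam - r)⁻¹ * q (Fin.castLE (Nat.sub_le n 1) i)) := by
      intro i; field_simp
    rw [Finset.prod_congr rfl fun i _ => he i, Finset.prod_mul_distrib, Finset.prod_const,
      Finset.card_univ, Fintype.card_fin]
  rw [hprod]
  have hpow : (lam - r) ^ n = (lam - r) ^ (n - 1) * (lam - r) := by
    conv_lhs => rw [show n = (n - 1) + 1 from by omega]
    rw [pow_succ]
  rw [hpow]
  have hαm : (lam - r) * (α * (1 - (m : ℝ) * α⁻¹)) = (lam - r) * (lam - 2 * m) - 2 * r := by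
    rw [mul_sub, mul_one, mul_comm (m : ℝ) α⁻¹, ← mul_assoc α α⁻¹, mul_inv_cancel₀ hα0, one_mul,
      mul_sub, hαr]
    push_cast
    ring
  calc (lam - r) ^ (n - 1) * (lam - r) *
        ((lam - m) ^ (m - n) *
          ((∏ i : Fin (n - 1), ((lam - m) - (lam - r)⁻¹ * q (Fin.castLE (Nat.sub_le n 1) i))) *
            ((lam - m) - (lam - r)⁻¹ * (2 * r))) *
          (1 - (m : ℝ) * α⁻¹))
      = ((lam - r) * (α * (1 - (m : ℝ) * α⁻¹))) * (lam - m) ^ (m - n) *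
          ((lam - r) ^ (n - 1) *
            ∏ i : Fin (n - 1), ((lam - m) - (lam - r)⁻¹ * q (Fin.castLE (Nat.sub_le n 1) i))) := by
        rw [hα, hc]; ring
    _ = _ := by rw [hαm]

open Polynomial in
lemma quad_set_finite (a b t : ℝ) : {x : ℝ | (x - a) * (x - b) - t = 0}.Finite := by
  classical
  set p : ℝ[X] := X ^ 2 + C (-(a + b)) * X + C (a * b - t) with hp
  have heval : ∀ x : ℝ, p.eval x = (x - a) * (x - b) - t := by
    intro x; simp [hp]; ring
  have hc2 : p.coeff 2 = 1 := by
    simp [hp, coeff_add, coeff_X_pow, coeff_C_mul, coeff_X, coeff_C]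
  have hp0 : p ≠ 0 := fun h => by simp [h] at hc2
  have hsub : {x : ℝ | (x - a) * (x - b) - t = 0} = {x : ℝ | p.IsRoot x} := by
    ext x; simp [IsRoot, heval]
  rw [hsub]
  exact p.finite_setOf_isRoot hp0

theorem signless_charpoly_xyz_zo_p {V : Type*} [Fintype V] (G : SimpleGraph V) (r n m : ℕ)
    (hn : Fintype.card V = n) (hm : Fintype.card G.edgeSet = m)
    (hreg : G.IsRegularOfDegree r) (hr2 : 2 ≤ r) (hn0 : 0 < n)
    (q : Fin n → ℝ) (hmono : Monotone q)
    (hlast : q ⟨n - 1, by omega⟩ = 2 * r)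
    (hq : ∀ x : ℝ, fQ G x = ∏ i : Fin n, (x - q i)) :
    ∀ lam : ℝ,
      fQ (xyzTransform G XYZ.zero XYZ.one XYZ.plus) lam =
        ((lam - r) * (lam - 2 * m) - 2 * r) * (lam - m) ^ (m - n) *
          ∏ i : Fin (n - 1), ((lam - r) * (lam - m) - (q (Fin.castLE (Nat.sub_le n 1) i))) := by
  classical
  -- m ≥ n
  have hsum : ∑ v : V, G.degree v = 2 * G.edgeFinset.card := G.sum_degrees_eq_twice_card_edges
  have hdeg : ∑ v : V, G.degree v = n * r := by
    rw [Finset.sum_congr rfl fun v _ => hreg v, Finset.sum_const, Finset.card_univ, hn,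
      smul_eq_mul]
  have hcard : G.edgeFinset.card = m := by rw [SimpleGraph.edgeFinset_card, hm]
  have h2m : n * r = 2 * m := by rw [← hdeg, hsum, hcard]
  have hnr : n * 2 ≤ n * r := Nat.mul_le_mul_left n hr2
  have hnm : n ≤ m := by omega
  -- the two sides as functions of lambda
  set f : ℝ → ℝ := fun x => fQ (xyzTransform G XYZ.zero XYZ.one XYZ.plus) x with hf
  set g : ℝ → ℝ := fun x =>
    ((x - r) * (x - 2 * m) - 2 * r) * (x - m) ^ (m - n) *
      ∏ i : Fin (n - 1), ((x - r) * (x - m) - q (Fin.castLE (Nat.sub_le n 1) i)) with hg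
  intro lam
  suffices hfg : f = g by exact congrFun hfg lam
  -- bad set
  set bad : Set ℝ :=
    ({(r : ℝ), (m : ℝ)} : Set ℝ) ∪ ⋃ i : Fin n, {x : ℝ | (x - r) * (x - m) - q i = 0} with hbad
  have hbadfin : bad.Finite := by
    apply Set.Finite.union
    · exact (Set.finite_singleton _).insert _
    · exact Set.finite_iUnion fun i => quad_set_finite _ _ _
  have hdense : Dense badᶜ := Set.Countable.dense_compl ℝ hbadfin.countable
  -- continuity
  have hcf : Continuous f := by
    have hrw : f = fun x => Matrix.det (x • (1 : Matrix (V ⊕ G.edgeSet) (V ⊕ G.edgeSet) ℝ)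
        - signlessLaplacian (xyzTransform G XYZ.zero XYZ.one XYZ.plus)) := by
      funext x
      rw [hf]
      simp only [fQ]
      congr
      exact Subsingleton.elim _ _
    rw [hrw]
    exact Continuous.matrix_det ((continuous_id.smul continuous_const).sub continuous_const)
  have hcg : Continuous g := by
    rw [hg]
    apply Continuous.mul
    · apply Continuous.mul
      · exact ((continuous_id.sub continuous_const).mul
          (continuous_id.sub continuous_const)).sub continuous_const
      · exact (continuous_id.sub continuous_const).pow _
    · exact continuous_finset_prod _ fun i _ =>
        ((continuous_id.sub continuous_const).mul
          (continuous_id.sub continuous_const)).sub continuous_const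
  refine hcf.ext_on hdense hcg ?_
  intro x hx
  simp only [hbad, Set.mem_compl_iff, Set.mem_union, Set.mem_insert_iff, Set.mem_singleton_iff,
    Set.mem_iUnion, Set.mem_setOf_eq, not_or, not_exists] at hx
  obtain ⟨⟨hxr, hxm⟩, hxq⟩ := hx
  exact main_good G r n m hn hm hreg hn0 hnm q hlast hq x
    (sub_ne_zero.mpr hxr) (sub_ne_zero.mpr hxm) hxq
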